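/- arXiv:1003.5944 — 2 statements merged into one kernel-verified Lean document; each statement's English description precedes it below -/
import Mathlib

section
/- Let X be a simplicial set and suppose x = yε where x ∈ X_n, y is a nondegenerate simplex of X, and ε is an epimorphism of Δ with domain [n]. Then an ordinal i with 0 ≤ i ≤ n−1 properly reduces x if and only if ε(i) = ε(i+1). -/
open CategoryTheory Simplicial

namespace AufhebungSSet

/-- An `n`-simplex `x` of a simplicial set `X` is degenerate if it is the image of a
simplex of strictly smaller dimension under the action of an epimorphism of `Δ`. -/
def IsDegen (X : SSet) {n : ℕ} (x : X _⦋n⦌) : Prop :=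
  ∃ m : ℕ, m < n ∧ ∃ ε : (⦋n⦌ : SimplexCategory) ⟶ ⦋m⦌,
    Function.Surjective ε.toOrderHom ∧ ∃ y : X _⦋m⦌, x = X.map ε.op y

/-- The degeneracy `dgn x = n - k`, where `k` is the least dimension from which `x`
is the image of a simplex under the action of an epimorphism; by the Eilenberg–Zilber
lemma this is the dimension of the nondegenerate simplex of which `x` is a degeneracy. -/
noncomputable def dgn (X : SSet) {n : ℕ} (x : X _⦋n⦌) : ℕ :=
  n - sInf (Set.ofPred fun k : ℕ => ∃ ε : (⦋n⦌ : SimplexCategory) ⟶ ⦋k⦌,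
    Function.Surjective ε.toOrderHom ∧ ∃ y : X _⦋k⦌, x = X.map ε.op y)

/-- `i` reduces `x` when `dgn (x δᵢ) = dgn x - 1`. -/
def Reduces (X : SSet) {n : ℕ} (i : Fin (n + 2)) (x : X _⦋n + 1⦌) : Prop :=
  dgn X (X.map (SimplexCategory.δ i).op x) + 1 = dgn X x

/-- `i` properly reduces `x` when `x = x δᵢ σᵢ`. -/
def ProperlyReduces (X : SSet) {n : ℕ} (i : Fin (n + 1)) (x : X _⦋n + 1⦌) : Prop :=
  x = X.map (SimplexCategory.σ i).op (X.map (SimplexCategory.δ i.castSucc).op x)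

/-- A `(K+2)`-sphere: a family `c₀, …, c_{K+2}` of `(K+1)`-simplices satisfying the
cycle equations `cⱼ δᵢ = cᵢ δ_{j-1}` for `i < j` (here reindexed: `c_{j+1} δᵢ = cᵢ δⱼ`
for `i ≤ j`). -/
def IsSphere (X : SSet) {K : ℕ} (c : Fin (K + 3) → X _⦋K + 1⦌) : Prop :=
  ∀ i j : Fin (K + 2), i ≤ j →
    X.map (SimplexCategory.δ i).op (c j.succ) = X.map (SimplexCategory.δ j).op (c i.castSucc)

/-- `y` fills the sphere `c` when `y δᵢ = cᵢ` for all `i`. -/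
def IsFiller (X : SSet) {K : ℕ} (y : X _⦋K + 2⦌) (c : Fin (K + 3) → X _⦋K + 1⦌) : Prop :=
  ∀ i : Fin (K + 3), X.map (SimplexCategory.δ i).op y = c i

/-- Pointwise formula for the composite `σᵢ ≫ δᵢ`. -/
lemma t_apply {n : ℕ} (i : Fin (n + 1)) (j : Fin (n + 2)) :
    (SimplexCategory.σ i ≫ SimplexCategory.δ i.castSucc).toOrderHom j
      = if j = i.castSucc then i.succ else j := by
  have : (SimplexCategory.σ i ≫ SimplexCategory.δ i.castSucc).toOrderHom j
      = (i.castSucc).succAbove (i.predAbove j) := rfl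
  rw [this]
  by_cases h : j = i.castSucc
  · subst h
    simp [Fin.predAbove_castSucc_self, Fin.succAbove_castSucc_self]
  · simp [h, Fin.succAbove_predAbove h]

/-- A simplex fixed by a non-identity endomorphism of `Δ` is degenerate. -/
lemma isDegen_of_fixed {X : SSet} {m : ℕ} {y : X _⦋m⦌}
    (g : (⦋m⦌ : SimplexCategory) ⟶ ⦋m⦌) (hg : g ≠ 𝟙 _) (hfix : y = X.map g.op y) :
    IsDegen X y := by
  have hninj : ¬ Function.Injective g.toOrderHom := by
    intro hinj
    have : Mono g := SimplexCategory.mono_iff_injective.2 hinj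
    exact hg (SimplexCategory.eq_id_of_mono g)
  match m, y, g, hninj, hfix with
  | 0, y, g, hninj, hfix =>
    refine absurd (fun a b _ => ?_) hninj
    have ha := a.isLt
    have hb := b.isLt
    simp only [SimplexCategory.len_mk] at ha hb
    ext
    omega
  | (k+1), y, g, hninj, hfix =>
    obtain ⟨i, g', hfac⟩ := SimplexCategory.eq_σ_comp_of_not_injective g hninj
    refine ⟨k, Nat.lt_succ_self k, SimplexCategory.σ i,
      SimplexCategory.epi_iff_surjective.1 inferInstance, X.map g'.op y, ?_⟩
    conv_lhs => rw [hfix, hfac]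
    rw [CategoryTheory.op_comp, X.map_comp]
    rfl

/-- If `x = y ε` with `y` nondegenerate and `ε` an epimorphism, then `i` properly
reduces `x` precisely when `ε i = ε (i + 1)`. -/
theorem properlyReduces_iff_epi_eq (X : SSet) (n m : ℕ) (x : X _⦋n + 1⦌) (y : X _⦋m⦌)
    (ε : (⦋n + 1⦌ : SimplexCategory) ⟶ ⦋m⦌) (hε : Function.Surjective ε.toOrderHom)
    (hy : ¬ IsDegen X y) (hx : x = X.map ε.op y) (i : Fin (n + 1)) :
    ProperlyReduces X i x ↔ ε.toOrderHom i.castSucc = ε.toOrderHom i.succ := by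
  set t : (⦋n+1⦌ : SimplexCategory) ⟶ ⦋n+1⦌ :=
    SimplexCategory.σ i ≫ SimplexCategory.δ i.castSucc with ht
  have hcomp : X.map (SimplexCategory.σ i).op
      (X.map (SimplexCategory.δ i.castSucc).op x) = X.map t.op x := by
    rw [ht, CategoryTheory.op_comp, X.map_comp]
    rfl
  rw [ProperlyReduces, hcomp]
  constructor
  · -- forward direction
    intro hfix
    by_contra hne
    have hlt : ε.toOrderHom i.castSucc < ε.toOrderHom i.succ :=
      lt_of_le_of_ne (ε.toOrderHom.monotone (Fin.castSucc_le_succ i)) hne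
    -- the maximal section of ε
    have hne' : ∀ v : Fin (m+1),
        (Finset.univ.filter (fun j => ε.toOrderHom j = v)).Nonempty := by
      intro v
      obtain ⟨j, hj⟩ := hε v
      exact ⟨j, Finset.mem_filter.2 ⟨Finset.mem_univ _, hj⟩⟩
    set f : Fin (m+1) → Fin (n+2) :=
      fun v => (Finset.univ.filter (fun j => ε.toOrderHom j = v)).max' (hne' v) with hf
    have hεf : ∀ v, ε.toOrderHom (f v) = v := by
      intro v
      have hmem := Finset.max'_mem _ (hne' v)
      rw [Finset.mem_filter] at hmem
      exact hmem.2
    have hmono : Monotone f := by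
      intro v w hvw
      by_contra hlt'
      push_neg at hlt'
      have h1 : ε.toOrderHom (f w) ≤ ε.toOrderHom (f v) := ε.toOrderHom.monotone hlt'.le
      rw [hεf, hεf] at h1
      have hvweq : v = w := le_antisymm hvw h1
      subst hvweq
      exact absurd rfl hlt'.ne'
    set s : (⦋m⦌ : SimplexCategory) ⟶ ⦋n+1⦌ := SimplexCategory.mkHom ⟨f, hmono⟩ with hs
    have hsec : s ≫ ε = 𝟙 _ := by
      apply SimplexCategory.Hom.ext
      apply OrderHom.ext
      funext v
      exact hεf v
    have hsi : f (ε.toOrderHom i.castSucc) = i.castSucc := by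
      apply le_antisymm
      · apply Finset.max'_le
        intro j hj
        rw [Finset.mem_filter] at hj
        by_contra hj'
        push_neg at hj'
        have h2 : i.succ ≤ j := Fin.castSucc_lt_iff_succ_le.1 hj'
        have h3 : ε.toOrderHom i.succ ≤ ε.toOrderHom j := ε.toOrderHom.monotone h2
        rw [hj.2] at h3
        exact absurd (lt_of_lt_of_le hlt h3) (lt_irrefl _)
      · apply Finset.le_max'
        exact Finset.mem_filter.2 ⟨Finset.mem_univ _, rfl⟩
    set g : (⦋m⦌ : SimplexCategory) ⟶ ⦋m⦌ := s ≫ t ≫ ε with hg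
    have hyfix : y = X.map g.op y := by
      have h1 : y = X.map s.op x := by
        rw [hx, ← FunctorToTypes.map_comp_apply, ← CategoryTheory.op_comp, hsec]
        simp
      calc y = X.map s.op x := h1
        _ = X.map s.op (X.map t.op x) := by rw [← hfix]
        _ = X.map s.op (X.map t.op (X.map ε.op y)) := by rw [← hx]
        _ = X.map g.op y := by
            rw [hg]
            simp [FunctorToTypes.map_comp_apply]
    have hgne : g ≠ 𝟙 _ := by
      intro hid
      have h4 : g.toOrderHom (ε.toOrderHom i.castSucc) = ε.toOrderHom i.castSucc := by
        rw [hid]; rfl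
      have h5 : g.toOrderHom (ε.toOrderHom i.castSucc) = ε.toOrderHom i.succ := by
        show ε.toOrderHom (t.toOrderHom (s.toOrderHom (ε.toOrderHom i.castSucc))) = _
        have hst : s.toOrderHom (ε.toOrderHom i.castSucc) = i.castSucc := hsi
        rw [hst, ht, t_apply i i.castSucc, if_pos rfl]
      rw [h5] at h4
      exact hne h4.symm
    exact hy (isDegen_of_fixed g hgne hyfix)
  · -- backward direction
    intro heq
    have htε : t ≫ ε = ε := by
      apply SimplexCategory.Hom.ext
      apply OrderHom.ext
      funext j
      show ε.toOrderHom (t.toOrderHom j) = ε.toOrderHom j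
      rw [ht, t_apply i j]
      by_cases h : j = i.castSucc
      · subst h
        rw [if_pos rfl]
        exact heq.symm
      · rw [if_neg h]
    rw [hx, ← FunctorToTypes.map_comp_apply, ← CategoryTheory.op_comp, htε]

end AufhebungSSet
end

section
/- Let X be a simplicial set and let c be a k-sphere in X (k ≥ 1) whose faces c_0, …, c_k all have degeneracy at least 2. Let r be the minimal value of dgn(c_i) over 0 ≤ i ≤ k and let m be the smallest ordinal with dgn(c_m) = r. If some ordinal j properly reduces both c_m and c_{m+1}, then c_m = c_{m+1}. -/
open CategoryTheory Simplicial

namespace AufhebungSSet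

def DSet (X : SSet) (n : ℕ) (x : X _⦋n⦌) : Set ℕ :=
  Set.ofPred fun k : ℕ => ∃ ε : (⦋n⦌ : SimplexCategory) ⟶ ⦋k⦌,
    Function.Surjective ε.toOrderHom ∧ ∃ y : X _⦋k⦌, x = X.map ε.op y

lemma dgn_eq (X : SSet) {n : ℕ} (x : X _⦋n⦌) : dgn X x = n - sInf (DSet X n x) := rfl

lemma self_mem_DSet (X : SSet) (n : ℕ) (x : X _⦋n⦌) : n ∈ DSet X n x :=
  ⟨𝟙 _, fun b => ⟨b, rfl⟩, x, by simp⟩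

lemma sInf_DSet_le (X : SSet) (n : ℕ) (x : X _⦋n⦌) : sInf (DSet X n x) ≤ n :=
  Nat.sInf_le (self_mem_DSet X n x)

lemma exists_min (X : SSet) (n : ℕ) (x : X _⦋n⦌) :
    ∃ ε : (⦋n⦌ : SimplexCategory) ⟶ ⦋sInf (DSet X n x)⦌,
      Function.Surjective ε.toOrderHom ∧ ∃ y, x = X.map ε.op y :=
  Nat.sInf_mem (Set.nonempty_of_mem (self_mem_DSet X n x))

lemma map_comp_apply (X : SSet) {a b c : SimplexCategory} (f : a ⟶ b) (g : b ⟶ c)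
    (x : X.obj (Opposite.op c)) : X.map (f ≫ g).op x = X.map f.op (X.map g.op x) := by
  rw [op_comp, X.map_comp]; rfl

lemma sInf_le_of_factor (X : SSet) (n : ℕ) (x : X _⦋n⦌) (k : ℕ)
    (θ : (⦋n⦌ : SimplexCategory) ⟶ ⦋k⦌) (z : X _⦋k⦌) (hx : x = X.map θ.op z) :
    sInf (DSet X n x) ≤ k := by
  induction k generalizing x with
  | zero => exact Nat.sInf_le ⟨θ, fun b => ⟨0, @Subsingleton.elim (Fin 1) _ _ _⟩, z, hx⟩
  | succ e ih =>
    by_cases hs : Function.Surjective θ.toOrderHom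
    · exact Nat.sInf_le ⟨θ, hs, z, hx⟩
    · obtain ⟨i, θ', hθ⟩ := SimplexCategory.eq_comp_δ_of_not_surjective θ hs
      have h := ih x θ' (X.map (SimplexCategory.δ i).op z)
        (by rw [hx, hθ, map_comp_apply])
      omega

lemma dgn_le_dgn_face_add_one (X : SSet) {n : ℕ} (x : X _⦋n + 1⦌) (l : Fin (n + 2)) :
    dgn X x ≤ dgn X (X.map (SimplexCategory.δ l).op x) + 1 := by
  obtain ⟨ε, hε, z, hz⟩ := exists_min X (n + 1) x
  have hface : X.map (SimplexCategory.δ l).op x = X.map (SimplexCategory.δ l ≫ ε).op z := by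
    rw [map_comp_apply, ← hz]
  have h1 : sInf (DSet X n (X.map (SimplexCategory.δ l).op x)) ≤ sInf (DSet X (n + 1) x) :=
    sInf_le_of_factor X n _ _ (SimplexCategory.δ l ≫ ε) z hface
  have h2 : sInf (DSet X (n + 1) x) ≤ n + 1 := sInf_DSet_le _ _ _
  rw [dgn_eq, dgn_eq]
  omega

lemma sigma_surj {n : ℕ} (j : Fin (n + 1)) :
    Function.Surjective (SimplexCategory.σ j).toOrderHom := by
  intro b
  exact ⟨(SimplexCategory.δ j.castSucc).toOrderHom b, by
    have : (SimplexCategory.δ j.castSucc ≫ SimplexCategory.σ j).toOrderHom b = b := by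
      rw [SimplexCategory.δ_comp_σ_self]; rfl
    exact this⟩

lemma dgn_sigma (X : SSet) {n : ℕ} (y : X _⦋n⦌) (j : Fin (n + 1)) :
    dgn X y + 1 ≤ dgn X (X.map (SimplexCategory.σ j).op y) := by
  obtain ⟨ε, hε, z, hz⟩ := exists_min X n y
  have hmem : sInf (DSet X n y) ∈ DSet X (n + 1) (X.map (SimplexCategory.σ j).op y) := by
    refine ⟨SimplexCategory.σ j ≫ ε, ?_, z, by rw [map_comp_apply, ← hz]⟩
    exact hε.comp (sigma_surj j)
  have h1 := Nat.sInf_le hmem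
  have h2 : sInf (DSet X n y) ≤ n := sInf_DSet_le _ _ _
  rw [dgn_eq, dgn_eq]
  omega

lemma delta_comp_eq {n d : ℕ} (ε : (⦋n+1⦌ : SimplexCategory) ⟶ ⦋d⦌) (t : Fin (n+1))
    (hf : ε.toOrderHom t.castSucc = ε.toOrderHom t.succ) :
    SimplexCategory.δ t.castSucc ≫ ε = SimplexCategory.δ t.succ ≫ ε := by
  apply SimplexCategory.Hom.ext
  apply OrderHom.ext
  funext i
  show ε.toOrderHom (t.castSucc.succAbove i) = ε.toOrderHom (t.succ.succAbove i)
  rcases lt_trichotomy i t with h | rfl | h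
  · rw [Fin.succAbove_of_castSucc_lt _ _ (by exact_mod_cast Fin.castSucc_lt_castSucc_iff.mpr h),
      Fin.succAbove_of_castSucc_lt _ _
        (lt_trans (Fin.castSucc_lt_castSucc_iff.mpr h) (Fin.castSucc_lt_succ (i := t)))]
  · rw [Fin.succAbove_of_le_castSucc _ _ le_rfl,
      Fin.succAbove_of_castSucc_lt _ _ (Fin.castSucc_lt_succ (i := i))]
    exact hf.symm
  · rw [Fin.succAbove_of_le_castSucc _ _ (Fin.castSucc_le_castSucc_iff.mpr h.le),
      Fin.succAbove_of_le_castSucc _ _ (by exact Fin.succ_le_castSucc_iff.mpr h)]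

lemma sInf_add_one_le_of_nonsurj (X : SSet) (n : ℕ) (x : X _⦋n⦌) (k : ℕ)
    (θ : (⦋n⦌ : SimplexCategory) ⟶ ⦋k⦌) (z : X _⦋k⦌) (hx : x = X.map θ.op z)
    (hns : ¬ Function.Surjective θ.toOrderHom) :
    sInf (DSet X n x) + 1 ≤ k := by
  induction k generalizing x with
  | zero => exact absurd (fun b => ⟨0, @Subsingleton.elim (Fin 1) _ _ _⟩) hns
  | succ e _ =>
    obtain ⟨i, θ', hθ⟩ := SimplexCategory.eq_comp_δ_of_not_surjective θ hns
    have h := sInf_le_of_factor X n x e θ' (X.map (SimplexCategory.δ i).op z)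
      (by rw [hx, hθ, map_comp_apply])
    omega

lemma tri (X : SSet) {n : ℕ} (w : X _⦋n + 1⦌) (M : Fin (n + 2)) :
    (∃ t : Fin (n + 1), (t.castSucc = M ∨ t.succ = M) ∧
        X.map (SimplexCategory.δ t.castSucc).op w = X.map (SimplexCategory.δ t.succ).op w) ∨
      dgn X w ≤ dgn X (X.map (SimplexCategory.δ M).op w) := by
  obtain ⟨ε, hε, z, hz⟩ := exists_min X (n + 1) w
  by_cases hmerge : ∃ t : Fin (n + 1), (t.castSucc = M ∨ t.succ = M) ∧
      ε.toOrderHom t.castSucc = ε.toOrderHom t.succ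
  · left
    obtain ⟨t, ht, hft⟩ := hmerge
    refine ⟨t, ht, ?_⟩
    have h1 : X.map (SimplexCategory.δ t.castSucc).op w
        = X.map (SimplexCategory.δ t.castSucc ≫ ε).op z := by rw [map_comp_apply, ← hz]
    have h2 : X.map (SimplexCategory.δ t.succ).op w
        = X.map (SimplexCategory.δ t.succ ≫ ε).op z := by rw [map_comp_apply, ← hz]
    rw [h1, h2, delta_comp_eq ε t hft]
  · right
    have hns : ¬ Function.Surjective (SimplexCategory.δ M ≫ ε).toOrderHom := by
      intro hs
      obtain ⟨i, hi⟩ := hs (ε.toOrderHom M)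
      have hi' : ε.toOrderHom (M.succAbove i) = ε.toOrderHom M := hi
      have hne : M.succAbove i ≠ M := Fin.succAbove_ne M i
      rcases lt_or_gt_of_ne hne with h | h
      · have hval : ((M.succAbove i : Fin (n+2)) : ℕ) < (M : ℕ) := h
        have hMn : (M : ℕ) - 1 < n + 1 := by have := M.isLt; omega
        refine hmerge ⟨⟨(M : ℕ) - 1, hMn⟩,
          Or.inr (Fin.ext (show (M : ℕ) - 1 + 1 = (M : ℕ) by omega)), ?_⟩
        have hle1 : M.succAbove i ≤ (⟨(M : ℕ) - 1, hMn⟩ : Fin (n+1)).castSucc :=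
          show ((M.succAbove i : Fin (n+2)) : ℕ) ≤ (M : ℕ) - 1 by omega
        have hle2 : (⟨(M : ℕ) - 1, hMn⟩ : Fin (n+1)).castSucc ≤ M :=
          show (M : ℕ) - 1 ≤ (M : ℕ) by omega
        have e1 := (ε.toOrderHom).monotone hle1
        have e2 := (ε.toOrderHom).monotone hle2
        rw [hi'] at e1
        have e3 : ε.toOrderHom ((⟨(M : ℕ) - 1, hMn⟩ : Fin (n+1)).succ) = ε.toOrderHom M := by
          congr 1
          exact Fin.ext (show (M : ℕ) - 1 + 1 = (M : ℕ) by omega)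
        rw [e3]
        exact le_antisymm e2 e1
      · have hval : (M : ℕ) < ((M.succAbove i : Fin (n+2)) : ℕ) := h
        have hMn : (M : ℕ) < n + 1 := by have := (M.succAbove i).isLt; omega
        refine hmerge ⟨⟨(M : ℕ), hMn⟩, Or.inl (Fin.ext rfl), ?_⟩
        have e0 : ε.toOrderHom ((⟨(M : ℕ), hMn⟩ : Fin (n+1)).castSucc) = ε.toOrderHom M := rfl
        have hle1 : M ≤ (⟨(M : ℕ), hMn⟩ : Fin (n+1)).succ :=
          show (M : ℕ) ≤ (M : ℕ) + 1 by omega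
        have hle2 : (⟨(M : ℕ), hMn⟩ : Fin (n+1)).succ ≤ M.succAbove i :=
          show (M : ℕ) + 1 ≤ ((M.succAbove i : Fin (n+2)) : ℕ) by omega
        have e1 := (ε.toOrderHom).monotone hle1
        have e2 := (ε.toOrderHom).monotone hle2
        rw [hi'] at e2
        rw [e0]
        exact le_antisymm e1 e2
    have hwM : X.map (SimplexCategory.δ M).op w
        = X.map (SimplexCategory.δ M ≫ ε).op z := by rw [map_comp_apply, ← hz]
    have hd2 : sInf (DSet X (n + 1) w) ≤ n + 1 := sInf_DSet_le _ _ _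
    have h := sInf_add_one_le_of_nonsurj X n (X.map (SimplexCategory.δ M).op w)
      (sInf (DSet X (n + 1) w)) (SimplexCategory.δ M ≫ ε) z hwM hns
    rw [dgn_eq, dgn_eq]
    omega

set_option maxHeartbeats 1000000 in
/-- If all faces of a sphere `c` have degeneracy at least 2, `r` is the minimal
degeneracy, `m` is the first face of degeneracy `r`, and some `j` properly reduces
both `c_m` and `c_{m+1}`, then `c_m = c_{m+1}`. -/
theorem mplus1_b (X : SSet) (K : ℕ) (c : Fin (K + 3) → X _⦋K + 1⦌) (hc : IsSphere X c)
    (r : ℕ) (hr : ∀ u : Fin (K + 3), r ≤ dgn X (c u))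
    (m : Fin (K + 3)) (hm : dgn X (c m) = r)
    (hmmin : ∀ u : Fin (K + 3), dgn X (c u) = r → m ≤ u)
    (hdeg : ∀ u : Fin (K + 3), 2 ≤ dgn X (c u))
    (hm1 : (m : ℕ) + 1 < K + 3) (j : Fin (K + 1))
    (hj1 : ProperlyReduces X j (c m))
    (hj2 : ProperlyReduces X j (c ⟨(m : ℕ) + 1, hm1⟩)) :
    c m = c ⟨(m : ℕ) + 1, hm1⟩ := by
  simp only [ProperlyReduces] at hj1 hj2
  set y := X.map (SimplexCategory.δ j.castSucc).op (c m) with hy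
  set y' := X.map (SimplexCategory.δ j.castSucc).op (c ⟨(m : ℕ) + 1, hm1⟩) with hy'
  suffices hkey : y = y' by rw [hj1, hj2, hkey]
  have hK2 : (m : ℕ) < K + 2 := by omega
  have hydgn : dgn X y + 1 = r := by
    have h1 := dgn_sigma X y j
    rw [← hj1] at h1
    have h2 := dgn_le_dgn_face_add_one X (c m) j.castSucc
    rw [hm] at h1 h2
    rw [← hy] at h2
    omega
  have sph : ∀ (a b : ℕ) (hab : a ≤ b) (hb : b < K + 2),
      X.map (SimplexCategory.δ (⟨a, lt_of_le_of_lt hab hb⟩ : Fin (K + 2))).op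
          (c ⟨b + 1, by omega⟩) =
        X.map (SimplexCategory.δ (⟨b, hb⟩ : Fin (K + 2))).op (c ⟨a, by omega⟩) := by
    intro a b hab hb
    exact hc ⟨a, lt_of_le_of_lt hab hb⟩ ⟨b, hb⟩ hab
  have contra : ∀ (a : ℕ) (ha : a < K + 3), a < (m : ℕ) → dgn X (c ⟨a, ha⟩) ≤ r → False := by
    intro a ha haM hle
    have h5 := hr ⟨a, ha⟩
    have h6 : dgn X (c ⟨a, ha⟩) = r := le_antisymm hle h5
    have h7 : (m : ℕ) ≤ a := hmmin ⟨a, ha⟩ h6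
    omega
  -- face via succ
  have hfm : X.map (SimplexCategory.δ j.succ).op (c m) = y := by
    conv_lhs => rw [hj1]
    rw [← FunctorToTypes.map_comp_apply, ← op_comp, SimplexCategory.δ_comp_σ_succ, op_id,
      FunctorToTypes.map_id_apply]
  have hfm' : X.map (SimplexCategory.δ j.succ).op (c ⟨(m : ℕ) + 1, hm1⟩) = y' := by
    conv_lhs => rw [hj2]
    rw [← FunctorToTypes.map_comp_apply, ← op_comp, SimplexCategory.δ_comp_σ_succ, op_id,
      FunctorToTypes.map_id_apply]
  rcases lt_trichotomy ((m : ℕ)) (j : ℕ) with hMj | hMj | hMj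
  · -- Case B : m < j
    have hjK : (j : ℕ) < K + 2 := by omega
    have hw1 : y = X.map (SimplexCategory.δ (⟨(m : ℕ), hK2⟩ : Fin (K + 2))).op
        (c ⟨(j : ℕ) + 1, by omega⟩) := by
      rw [hy]
      exact (sph (m : ℕ) (j : ℕ) (le_of_lt hMj) hjK).symm
    have hw2 : y' = X.map (SimplexCategory.δ (⟨(m : ℕ) + 1, by omega⟩ : Fin (K + 2))).op
        (c ⟨(j : ℕ) + 1, by omega⟩) := by
      rw [hy']
      exact (sph ((m : ℕ) + 1) (j : ℕ) hMj hjK).symm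
    rcases tri X (c ⟨(j : ℕ) + 1, by omega⟩) ⟨(m : ℕ), hK2⟩ with ⟨t, ht, hface⟩ | hdg
    · rcases ht with h | h
      · have htv : (t : ℕ) = (m : ℕ) := congrArg Fin.val h
        have e2 : t.succ = (⟨(m : ℕ) + 1, by omega⟩ : Fin (K + 2)) :=
          Fin.ext (show (t : ℕ) + 1 = (m : ℕ) + 1 by omega)
        rw [hw1, hw2, ← h, ← e2]
        exact hface
      · have htv : (t : ℕ) + 1 = (m : ℕ) := congrArg Fin.val h
        have hyy : y = X.map (SimplexCategory.δ t.castSucc).op (c ⟨(j : ℕ) + 1, by omega⟩) := by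
          rw [hw1, ← h]; exact hface.symm
        have hs2 := sph (t : ℕ) (j : ℕ) (by omega) hjK
        have hyy2 : y = X.map (SimplexCategory.δ (⟨(j : ℕ), hjK⟩ : Fin (K + 2))).op
            (c ⟨(t : ℕ), by omega⟩) := by
          rw [hyy]; exact hs2
        exfalso
        have h4 := dgn_le_dgn_face_add_one X (c ⟨(t : ℕ), by omega⟩) ⟨(j : ℕ), hjK⟩
        rw [← hyy2] at h4
        exact contra (t : ℕ) (by omega) (by omega) (by omega)
    · exfalso
      rw [← hw1] at hdg
      have h5 := hr ⟨(j : ℕ) + 1, by omega⟩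
      omega
  · -- Case A1 : m = j
    have e1 : j.castSucc = (⟨(m : ℕ), hK2⟩ : Fin (K + 2)) := Fin.ext hMj.symm
    rw [hy, hy', e1]
    exact (sph (m : ℕ) (m : ℕ) le_rfl hK2).symm
  · -- j < m
    rcases Nat.eq_or_lt_of_le hMj with hMj2 | hMj2
    · -- Case A2 : m = j + 1
      have e1 : j.succ = (⟨(m : ℕ), hK2⟩ : Fin (K + 2)) := Fin.ext (show (j:ℕ)+1 = (m:ℕ) by omega)
      calc y = X.map (SimplexCategory.δ j.succ).op (c m) := hfm.symm
        _ = X.map (SimplexCategory.δ j.succ).op (c ⟨(m : ℕ) + 1, hm1⟩) := by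
            rw [e1]; exact (sph (m : ℕ) (m : ℕ) le_rfl hK2).symm
        _ = y' := hfm'
    · -- Case C : j + 1 < m
      obtain ⟨N, hN⟩ : ∃ N, (m : ℕ) = N + 2 := ⟨(m : ℕ) - 2, by omega⟩
      have hjN : (j : ℕ) ≤ N := by omega
      have hN2 : N + 1 < K + 2 := by omega
      have hv1 : y = X.map (SimplexCategory.δ (⟨N + 1, hN2⟩ : Fin (K + 2))).op
          (c ⟨(j : ℕ), by omega⟩) := by
        have hs := sph (j : ℕ) (N + 1) (by omega) hN2
        rw [hy, show m = (⟨N + 2, by omega⟩ : Fin (K + 3)) from Fin.ext hN]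
        exact hs
      have hv2 : y' = X.map (SimplexCategory.δ (⟨N + 2, by omega⟩ : Fin (K + 2))).op
          (c ⟨(j : ℕ), by omega⟩) := by
        have hs := sph (j : ℕ) (N + 2) (by omega) (by omega)
        rw [hy', show (⟨(m : ℕ) + 1, hm1⟩ : Fin (K + 3)) = ⟨N + 3, by omega⟩ from
          Fin.ext (show (m:ℕ)+1 = N+3 by omega)]
        exact hs
      rcases tri X (c ⟨(j : ℕ), by omega⟩) ⟨N + 1, hN2⟩ with ⟨t, ht, hface⟩ | hdg
      · rcases ht with h | h
        · have htv : (t : ℕ) = N + 1 := congrArg Fin.val h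
          have e2 : t.succ = (⟨N + 2, by omega⟩ : Fin (K + 2)) :=
            Fin.ext (show (t : ℕ) + 1 = N + 2 by omega)
          rw [hv1, hv2, ← h, ← e2]
          exact hface
        · have htv : (t : ℕ) + 1 = N + 1 := congrArg Fin.val h
          have hyy : y = X.map (SimplexCategory.δ t.castSucc).op (c ⟨(j : ℕ), by omega⟩) := by
            rw [hv1, ← h]; exact hface.symm
          have hs2 := sph (j : ℕ) (t : ℕ) (by omega) (by omega)
          have hyy2 : y = X.map (SimplexCategory.δ (⟨(j : ℕ), by omega⟩ : Fin (K + 2))).op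
              (c ⟨(t : ℕ) + 1, by omega⟩) := by
            rw [hyy]
            exact hs2.symm
          exfalso
          have h4 := dgn_le_dgn_face_add_one X (c ⟨(t : ℕ) + 1, by omega⟩)
            ⟨(j : ℕ), by omega⟩
          rw [← hyy2] at h4
          exact contra ((t : ℕ) + 1) (by omega) (by omega) (by omega)
      · exfalso
        rw [← hv1] at hdg
        have h5 := hr ⟨(j : ℕ), by omega⟩
        omega

end AufhebungSSet
end
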